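/- arXiv:2507.05908 — 2 statements merged into one kernel-verified Lean document; each statement's English description precedes it below -/
import Mathlib

section
/- Let n ≥ 1 be an integer, let α > 1, let r₀ > 0, and let m, k be real numbers with k ≥ 0 and m/(α-1) - n/2 - k/2 > 0. Then, as t → 0⁺, t^{-n/2} · ∫_{{x ∈ ℝⁿ : ‖x‖ ≥ r₀}} (1 + (α-1)‖x‖²/(8t))^{-m/(α-1)} · ‖x‖^k dx = o(t^{k/2}). -/
open MeasureTheory Real Filter Asymptotics Topology

/-- For `α > 1`, `r₀ > 0`, `k ≥ 0` and `m/(α-1) - n/2 - k/2 > 0`, as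
`t → 0⁺`:
`t^{-n/2} ∫_{{‖x‖ ≥ r₀}} (1 + (α-1)‖x‖²/(8t))^{-m/(α-1)} ‖x‖^k dx = o(t^{k/2})`. -/
theorem stmt11 (n : ℕ) (hn : 1 ≤ n) (α : ℝ) (hα : 1 < α) (r₀ : ℝ) (hr₀ : 0 < r₀)
    (m k : ℝ) (hk : 0 ≤ k) (hmk : 0 < m / (α - 1) - (n : ℝ) / 2 - k / 2) :
    (fun t : ℝ => t ^ (-(n : ℝ) / 2) *
        ∫ x in {x : EuclideanSpace ℝ (Fin n) | r₀ ≤ ‖x‖},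
          (1 + (α - 1) * ‖x‖ ^ 2 / (8 * t)) ^ (-(m / (α - 1))) * ‖x‖ ^ k)
      =o[𝓝[>] (0 : ℝ)] fun t : ℝ => t ^ (k / 2) := by
  set β := m / (α - 1) with hβdef
  have hα1 : (0:ℝ) < α - 1 := by linarith
  have hn0 : (0:ℝ) ≤ (n:ℝ)/2 := by positivity
  have hβ : (n:ℝ)/2 + k/2 < β := by linarith
  have hβ0 : 0 < β := by linarith
  have hexp : (0:ℝ) < 2*β - k := by linarith
  -- integrability of the dominating function
  have hfr : (Module.finrank ℝ (EuclideanSpace ℝ (Fin n)) : ℝ) < 2*β - k := by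
    rw [finrank_euclideanSpace_fin]; linarith
  have hI : Integrable (fun x : EuclideanSpace ℝ (Fin n) => (1 + ‖x‖) ^ (-(2*β - k))) :=
    integrable_one_add_norm hfr
  set I := ∫ x : EuclideanSpace ℝ (Fin n), (1 + ‖x‖) ^ (-(2*β - k)) with hIdef
  have hInn : 0 ≤ I :=
    integral_nonneg fun x => rpow_nonneg (by positivity) _
  set D : ℝ := (8 / (α - 1)) ^ β * (1 + 1/r₀) ^ (2*β - k) with hD
  have hD0 : 0 ≤ D := by positivity
  have hs : MeasurableSet {x : EuclideanSpace ℝ (Fin n) | r₀ ≤ ‖x‖} :=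
    measurableSet_le measurable_const measurable_norm
  -- key bound on the integral
  have key : ∀ t : ℝ, 0 < t →
      (∫ x in {x : EuclideanSpace ℝ (Fin n) | r₀ ≤ ‖x‖},
        (1 + (α - 1) * ‖x‖ ^ 2 / (8 * t)) ^ (-β) * ‖x‖ ^ k) ≤ t ^ β * (D * I) := by
    intro t ht
    have hgint : Integrable
        (fun x : EuclideanSpace ℝ (Fin n) => t ^ β * D * (1 + ‖x‖) ^ (-(2*β - k))) :=
      hI.const_mul _
    have hmono : (∫ x in {x : EuclideanSpace ℝ (Fin n) | r₀ ≤ ‖x‖},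
        (1 + (α - 1) * ‖x‖ ^ 2 / (8 * t)) ^ (-β) * ‖x‖ ^ k)
        ≤ ∫ x in {x : EuclideanSpace ℝ (Fin n) | r₀ ≤ ‖x‖},
          t ^ β * D * (1 + ‖x‖) ^ (-(2*β - k)) := by
      apply integral_mono_of_nonneg
      · filter_upwards with x
        have hb : 0 ≤ (α - 1) * ‖x‖ ^ 2 / (8 * t) :=
          div_nonneg (mul_nonneg hα1.le (sq_nonneg _)) (by linarith)
        exact mul_nonneg (rpow_nonneg (by linarith) _) (rpow_nonneg (norm_nonneg _) _)
      · exact hgint.restrict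
      · filter_upwards [ae_restrict_mem hs] with x hx
        have hxr : r₀ ≤ ‖x‖ := hx
        have hr : (0:ℝ) < ‖x‖ := lt_of_lt_of_le hr₀ hxr
        set r : ℝ := ‖x‖ with hrdef
        have hc : (0:ℝ) < (α - 1) * r ^ 2 / (8 * t) := by positivity
        have step1 : (1 + (α - 1) * r ^ 2 / (8 * t)) ^ (-β)
            ≤ ((α - 1) * r ^ 2 / (8 * t)) ^ (-β) :=
          rpow_le_rpow_of_nonpos hc (by linarith) (by linarith)
        have step2 : ((α - 1) * r ^ 2 / (8 * t)) ^ (-β)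
            = t ^ β * (8 / (α - 1)) ^ β * r ^ (-(2*β)) := by
          have e1 : (α - 1) * r ^ 2 / (8 * t) = (t * (8 / (α - 1)))⁻¹ * r ^ (2:ℝ) := by
            rw [rpow_two]
            field_simp
          rw [e1, mul_rpow (by positivity) (by positivity),
            inv_rpow (by positivity), rpow_neg (by positivity), inv_inv,
            mul_rpow ht.le (by positivity),
            ← rpow_mul hr.le, show (2:ℝ) * (-β) = -(2*β) by ring]
        have step3 : r ^ (k - 2*β) ≤ (1 + 1/r₀) ^ (2*β - k) * (1 + r) ^ (-(2*β - k)) := by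
          have h1r : 1 + r ≤ (1 + 1/r₀) * r := by
            have hdiv : 1 ≤ r / r₀ := (one_le_div hr₀).mpr hxr
            have : (1 + 1/r₀) * r = r + r / r₀ := by field_simp
            linarith
          have hmono2 : ((1 + 1/r₀) * r) ^ (k - 2*β) ≤ (1 + r) ^ (k - 2*β) :=
            rpow_le_rpow_of_nonpos (by positivity) h1r (by linarith)
          have hsplit : ((1 + 1/r₀) * r) ^ (k - 2*β)
              = (1 + 1/r₀) ^ (k - 2*β) * r ^ (k - 2*β) :=
            mul_rpow (by positivity) hr.le
          have hinv : (1 + 1/r₀) ^ (2*β - k) * (1 + 1/r₀) ^ (k - 2*β) = 1 := by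
            rw [← rpow_add (by positivity)]; norm_num
          calc r ^ (k - 2*β)
              = (1 + 1/r₀) ^ (2*β - k) * ((1 + 1/r₀) ^ (k - 2*β) * r ^ (k - 2*β)) := by
                rw [← mul_assoc, hinv, one_mul]
            _ = (1 + 1/r₀) ^ (2*β - k) * ((1 + 1/r₀) * r) ^ (k - 2*β) := by rw [hsplit]
            _ ≤ (1 + 1/r₀) ^ (2*β - k) * (1 + r) ^ (k - 2*β) := by
                exact mul_le_mul_of_nonneg_left hmono2 (by positivity)
            _ = (1 + 1/r₀) ^ (2*β - k) * (1 + r) ^ (-(2*β - k)) := by ring_nf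
        calc (1 + (α - 1) * r ^ 2 / (8 * t)) ^ (-β) * r ^ k
            ≤ ((α - 1) * r ^ 2 / (8 * t)) ^ (-β) * r ^ k :=
              mul_le_mul_of_nonneg_right step1 (rpow_nonneg hr.le _)
          _ = t ^ β * (8 / (α - 1)) ^ β * (r ^ (-(2*β)) * r ^ k) := by rw [step2]; ring
          _ = t ^ β * (8 / (α - 1)) ^ β * r ^ (k - 2*β) := by
              rw [← rpow_add hr]; ring_nf
          _ ≤ t ^ β * (8 / (α - 1)) ^ β *
              ((1 + 1/r₀) ^ (2*β - k) * (1 + r) ^ (-(2*β - k))) := by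
              exact mul_le_mul_of_nonneg_left step3 (by positivity)
          _ = t ^ β * D * (1 + r) ^ (-(2*β - k)) := by rw [hD]; ring
    refine hmono.trans ?_
    have h2 : (∫ x in {x : EuclideanSpace ℝ (Fin n) | r₀ ≤ ‖x‖},
          t ^ β * D * (1 + ‖x‖) ^ (-(2*β - k)))
        ≤ ∫ x : EuclideanSpace ℝ (Fin n), t ^ β * D * (1 + ‖x‖) ^ (-(2*β - k)) :=
      setIntegral_le_integral hgint
        (Eventually.of_forall fun x => by
          exact mul_nonneg (by positivity) (rpow_nonneg (by positivity) _))
    refine h2.trans ?_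
    rw [integral_const_mul]
    rw [← hIdef, mul_assoc]
  -- assemble asymptotics
  set δ : ℝ := β - (n:ℝ)/2 - k/2 with hδ
  have hδ0 : 0 < δ := by simp only [hδ]; linarith
  have hbigO : (fun t : ℝ => t ^ (-(n : ℝ) / 2) *
        ∫ x in {x : EuclideanSpace ℝ (Fin n) | r₀ ≤ ‖x‖},
          (1 + (α - 1) * ‖x‖ ^ 2 / (8 * t)) ^ (-β) * ‖x‖ ^ k)
      =O[𝓝[>] (0 : ℝ)] fun t : ℝ => t ^ (β - (n:ℝ)/2) := by
    rw [isBigO_iff]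
    refine ⟨D * I, ?_⟩
    filter_upwards [self_mem_nhdsWithin] with t ht
    have ht : (0:ℝ) < t := ht
    have hintnn : 0 ≤ ∫ x in {x : EuclideanSpace ℝ (Fin n) | r₀ ≤ ‖x‖},
        (1 + (α - 1) * ‖x‖ ^ 2 / (8 * t)) ^ (-β) * ‖x‖ ^ k := by
      apply setIntegral_nonneg hs
      intro x _
      have hb : 0 ≤ (α - 1) * ‖x‖ ^ 2 / (8 * t) :=
        div_nonneg (mul_nonneg hα1.le (sq_nonneg _)) (by linarith)
      exact mul_nonneg (rpow_nonneg (by linarith) _) (rpow_nonneg (norm_nonneg _) _)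
    rw [Real.norm_eq_abs, Real.norm_eq_abs,
      abs_of_nonneg (mul_nonneg (rpow_nonneg ht.le _) hintnn),
      abs_of_nonneg (rpow_nonneg ht.le _)]
    calc t ^ (-(n : ℝ) / 2) * ∫ x in {x : EuclideanSpace ℝ (Fin n) | r₀ ≤ ‖x‖},
          (1 + (α - 1) * ‖x‖ ^ 2 / (8 * t)) ^ (-β) * ‖x‖ ^ k
        ≤ t ^ (-(n : ℝ) / 2) * (t ^ β * (D * I)) :=
          mul_le_mul_of_nonneg_left (key t ht) (rpow_nonneg ht.le _)
      _ = D * I * t ^ (β - (n:ℝ)/2) := by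
          rw [← mul_assoc, ← rpow_add ht]
          rw [show -(n : ℝ) / 2 + β = β - (n:ℝ)/2 by ring]
          ring
  have hlittle : (fun t : ℝ => t ^ (β - (n:ℝ)/2)) =o[𝓝[>] (0 : ℝ)]
      fun t : ℝ => t ^ (k / 2) := by
    rw [isLittleO_iff_tendsto' (by
      filter_upwards [self_mem_nhdsWithin] with t ht h0
      exact absurd h0 (rpow_pos_of_pos ht _).ne')]
    have htend : Filter.Tendsto (fun t : ℝ => t ^ δ) (𝓝[>] (0:ℝ)) (𝓝 0) := by
      have hc := (Real.continuousAt_rpow_const 0 δ (Or.inr hδ0.le)).tendsto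
      rw [Real.zero_rpow hδ0.ne'] at hc
      exact hc.mono_left nhdsWithin_le_nhds
    refine htend.congr' ?_
    filter_upwards [self_mem_nhdsWithin] with t ht
    have ht : (0:ℝ) < t := ht
    rw [hδ, show β - (n:ℝ)/2 - k/2 = (β - (n:ℝ)/2) - k/2 by ring, rpow_sub ht]
  exact hbigO.trans_isLittleO hlittle
end

section
/- Let n ≥ 1 be an integer, let k ≥ 0 and m be real numbers, and let α > 0 satisfy either (0 < α < 1 and m > 0) or (α > 1 and m/(α-1) - n/2 - k/2 > 0). Define H(r) := (1 + (α-1)r²/8)_+^{1/(1-α)} for r ≥ 0. Let W ⊆ ℝⁿ be a Lebesgue measurable set and let F : ℝⁿ → ℝ be measurable, bounded on W, and satisfy F(x)/‖x‖^k → 0 as x → 0 (x ≠ 0). Then, as t → 0⁺, t^{-n/2} · ∫_W H(‖x‖/√t)^m · F(x) dx = o(t^{k/2}). -/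
open MeasureTheory Real Filter Asymptotics Topology

/-- The profile `H(r) := (1 + (α-1)r²/8)₊^{1/(1-α)}` of the Gagliardo–Nirenberg
extremal functions. -/
noncomputable def Hprofile (α r : ℝ) : ℝ :=
  (max (1 + (α - 1) * r ^ 2 / 8) 0) ^ (1 / (1 - α))

lemma Hprofile_nonneg (α r : ℝ) : 0 ≤ Hprofile α r :=
  Real.rpow_nonneg (le_max_right _ _) _

lemma Hprofile_rpow_eq {α : ℝ} (m : ℝ) (hα : 1 < α) (r : ℝ) :
    Hprofile α r ^ m = (1 + (α - 1) * r ^ 2 / 8) ^ (-(m / (α - 1))) := by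
  have hb : (0:ℝ) ≤ (α - 1) * r ^ 2 / 8 := by nlinarith [sq_nonneg r]
  have hmax : max (1 + (α - 1) * r ^ 2 / 8) 0 = 1 + (α - 1) * r ^ 2 / 8 :=
    max_eq_left (by linarith)
  rw [Hprofile, hmax, ← Real.rpow_mul (by linarith)]
  congr 1
  have h1 : (1:ℝ) - α ≠ 0 := by linarith
  have h2 : α - 1 ≠ 0 := by linarith
  field_simp
  ring

lemma aux_decay {α m s : ℝ} (hα : 1 < α) (hm : 0 < m) (hs : 0 ≤ s) (r : ℝ) (hr : 0 ≤ r) :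
    Hprofile α r ^ m * r ^ s ≤
      (max 2 (16 / (α - 1))) ^ (m / (α - 1)) * (1 + r) ^ (-(2 * (m / (α - 1)) - s)) := by
  set p := m / (α - 1) with hp
  have hp0 : 0 < p := div_pos hm (by linarith)
  set K := max (2:ℝ) (16 / (α - 1)) with hK
  have hK2 : (2:ℝ) ≤ K := le_max_left _ _
  have hKc : 16 / (α - 1) ≤ K := le_max_right _ _
  have hKpos : (0:ℝ) < K := lt_of_lt_of_le two_pos hK2
  set b := 1 + (α - 1) * r ^ 2 / 8 with hb
  have hbpos : (0:ℝ) < b := by rw [hb]; nlinarith [sq_nonneg r]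
  have h1r : (0:ℝ) < 1 + r := by linarith
  clear_value p K b
  have hkey : (1 + r) ^ (2:ℕ) ≤ K * b := by
    have hq : (0:ℝ) ≤ (α - 1) * r ^ 2 / 8 := by nlinarith [sq_nonneg r]
    have h3 : 16 / (α - 1) * ((α - 1) * r ^ 2 / 8) = 2 * r ^ 2 := by
      have hα0 : α - 1 ≠ 0 := by linarith
      field_simp
      ring
    have hKb : K * b = K + K * ((α - 1) * r ^ 2 / 8) := by rw [hb]; ring
    have e1 : (1 + r) ^ (2:ℕ) = 1 + 2 * r + r ^ 2 := by ring
    have e2 : 2 * r ≤ 1 + r ^ 2 := by nlinarith [sq_nonneg (1 - r)]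
    have e3 : 2 * r ^ 2 ≤ K * ((α - 1) * r ^ 2 / 8) := by
      rw [← h3]; exact mul_le_mul_of_nonneg_right hKc hq
    linarith
  have h4 : (1 + r) ^ ((2:ℝ) * p) ≤ K ^ p * b ^ p := by
    rw [Real.rpow_mul h1r.le, ← Real.mul_rpow hKpos.le hbpos.le]
    apply Real.rpow_le_rpow (by positivity) _ hp0.le
    rw [Real.rpow_two]
    exact_mod_cast hkey
  rw [Hprofile_rpow_eq m hα r, ← hb, ← hp]
  have h5 : b ^ (-p) * (1 + r) ^ ((2:ℝ) * p) ≤ K ^ p := by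
    rw [Real.rpow_neg hbpos.le]
    rw [inv_mul_le_iff₀ (Real.rpow_pos_of_pos hbpos p)]
    calc (1 + r) ^ ((2:ℝ) * p) ≤ K ^ p * b ^ p := h4
      _ = b ^ p * K ^ p := by ring
  have hrs : r ^ s ≤ (1 + r) ^ s := Real.rpow_le_rpow hr (by linarith) hs
  have hsplit : (1 + r) ^ s = (1 + r) ^ ((2:ℝ) * p) * (1 + r) ^ (-(2 * p - s)) := by
    rw [← Real.rpow_add h1r]
    ring_nf
  calc b ^ (-p) * r ^ s ≤ b ^ (-p) * (1 + r) ^ s := by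
        apply mul_le_mul_of_nonneg_left hrs (Real.rpow_nonneg hbpos.le _)
    _ = (b ^ (-p) * (1 + r) ^ ((2:ℝ) * p)) * (1 + r) ^ (-(2 * p - s)) := by
        rw [hsplit]; ring
    _ ≤ K ^ p * (1 + r) ^ (-(2 * p - s)) := by
        apply mul_le_mul_of_nonneg_right h5 (Real.rpow_nonneg h1r.le _)

lemma aux_cont {α m : ℝ} (hm : 0 < m) (hα : α < 1 ∨ 1 < α) :
    Continuous fun r : ℝ => Hprofile α r ^ m := by
  have hb : Continuous fun r : ℝ => max (1 + (α - 1) * r ^ 2 / 8) 0 := by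
    fun_prop
  rw [continuous_iff_continuousAt]
  intro r
  have h1 : ContinuousAt (fun r : ℝ => Hprofile α r) r := by
    refine ContinuousAt.rpow_const hb.continuousAt ?_
    rcases hα with h | h
    · refine Or.inr (le_of_lt ?_)
      have h1α : (0:ℝ) < 1 - α := by linarith
      positivity
    · refine Or.inl (ne_of_gt ?_)
      have : (0:ℝ) ≤ (α - 1) * r ^ 2 / 8 := by nlinarith [sq_nonneg r]
      exact lt_max_of_lt_left (by linarith)
  exact h1.rpow_const (Or.inr hm.le)

lemma aux_integrable (n : ℕ) {α m s : ℝ} (hm : 0 < m) (hs : 0 ≤ s)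
    (hcase : α < 1 ∨ (1 < α ∧ (n:ℝ) + s < 2 * (m / (α - 1)))) :
    Integrable (fun y : EuclideanSpace ℝ (Fin n) => Hprofile α ‖y‖ ^ m * ‖y‖ ^ s) := by
  have hcont : Continuous
      fun y : EuclideanSpace ℝ (Fin n) => Hprofile α ‖y‖ ^ m * ‖y‖ ^ s := by
    have h1 := (aux_cont hm (hcase.imp id And.left)).comp
      (continuous_norm : Continuous fun y : EuclideanSpace ℝ (Fin n) => ‖y‖)
    exact h1.mul ((Real.continuous_rpow_const hs).comp continuous_norm)
  rcases hcase with h | ⟨h, hns⟩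
  · apply hcont.integrable_of_hasCompactSupport
    apply HasCompactSupport.intro
      (isCompact_closedBall (0 : EuclideanSpace ℝ (Fin n)) (Real.sqrt (8 / (1 - α))))
    intro x hx
    simp only [Metric.mem_closedBall, dist_zero_right, not_le] at hx
    have h1α : (0:ℝ) < 1 - α := by linarith
    have hx2 : 8 / (1 - α) < ‖x‖ ^ 2 := by
      have hs8 := Real.sq_sqrt (by positivity : (0:ℝ) ≤ 8 / (1 - α))
      nlinarith [Real.sqrt_nonneg (8 / (1 - α)), norm_nonneg x]
    have hbneg : 1 + (α - 1) * ‖x‖ ^ 2 / 8 ≤ 0 := by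
      have h8 : 8 / (1 - α) * (1 - α) = 8 := by field_simp
      nlinarith
    have hzero : Hprofile α ‖x‖ = 0 := by
      rw [Hprofile, max_eq_right hbneg, Real.zero_rpow]
      exact one_div_ne_zero (by linarith)
    rw [hzero, Real.zero_rpow hm.ne', zero_mul]
  · set p := m / (α - 1) with hp
    have hp0 : 0 < p := div_pos hm (by linarith)
    have hnr : (Module.finrank ℝ (EuclideanSpace ℝ (Fin n)) : ℝ) < 2 * p - s := by
      rw [finrank_euclideanSpace_fin]; linarith
    have hint := (integrable_one_add_norm (μ := (volume : Measure (EuclideanSpace ℝ (Fin n))))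
      hnr).const_mul ((max (2:ℝ) (16 / (α - 1))) ^ p)
    refine hint.mono' hcont.aestronglyMeasurable ?_
    filter_upwards with y
    rw [Real.norm_eq_abs, abs_of_nonneg (mul_nonneg
      (Real.rpow_nonneg (Hprofile_nonneg _ _) _) (Real.rpow_nonneg (norm_nonneg _) _))]
    exact aux_decay h hm hs ‖y‖ (norm_nonneg y)

lemma aux_tail {n : ℕ} (g : EuclideanSpace ℝ (Fin n) → ℝ) (hg : Integrable g) :
    Tendsto (fun R : ℝ => ∫ y in {y : EuclideanSpace ℝ (Fin n) | R ≤ ‖y‖}, g y)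
      atTop (𝓝 0) := by
  have hmeas : ∀ R : ℝ, MeasurableSet {y : EuclideanSpace ℝ (Fin n) | R ≤ ‖y‖} := by
    intro R
    exact (isClosed_le continuous_const continuous_norm).measurableSet
  have hanti : Antitone fun R : ℝ => {y : EuclideanSpace ℝ (Fin n) | R ≤ ‖y‖} := by
    intro R₁ R₂ h x hx
    exact le_trans h hx
  have := tendsto_setIntegral_of_antitone hmeas hanti ⟨0, hg.integrableOn⟩
  have hempty : ⋂ R : ℝ, {y : EuclideanSpace ℝ (Fin n) | R ≤ ‖y‖} = ∅ := by
    ext y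
    simp only [Set.mem_iInter, Set.mem_setOf_eq, Set.mem_empty_iff_false, iff_false, not_forall,
      not_le]
    exact ⟨‖y‖ + 1, by linarith⟩
  rwa [hempty, Measure.restrict_empty, integral_zero_measure] at this

lemma aux_scaling {n : ℕ} (φ : EuclideanSpace ℝ (Fin n) → ℝ) {c : ℝ} (hc : 0 < c) :
    ∫ x, φ x = c ^ n * ∫ y, φ (c • y) := by
  rw [MeasureTheory.Measure.integral_comp_smul_of_nonneg
    (μ := (volume : Measure (EuclideanSpace ℝ (Fin n)))) φ c (hR := hc.le)]
  rw [finrank_euclideanSpace_fin, smul_eq_mul, ← mul_assoc,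
    mul_inv_cancel₀ (by positivity), one_mul]


/-- Let `k ≥ 0`, `m` real, and `α > 0` with either (`0 < α < 1` and
`m > 0`) or (`α > 1` and `m/(α-1) - n/2 - k/2 > 0`). If `W ⊆ ℝⁿ` is measurable and
`F : ℝⁿ → ℝ` is measurable, bounded on `W`, and satisfies `F(x)/‖x‖^k → 0` as `x → 0`
(through `x ≠ 0`), then as `t → 0⁺`:
`t^{-n/2} ∫_W H(‖x‖/√t)^m F(x) dx = o(t^{k/2})`. -/
theorem stmt12 (n : ℕ) (hn : 1 ≤ n) (k m α : ℝ) (hk : 0 ≤ k) (hα : 0 < α)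
    (hcase : (0 < α ∧ α < 1 ∧ 0 < m) ∨ (1 < α ∧ 0 < m / (α - 1) - (n : ℝ) / 2 - k / 2))
    (W : Set (EuclideanSpace ℝ (Fin n))) (hW : MeasurableSet W)
    (F : EuclideanSpace ℝ (Fin n) → ℝ) (hFmeas : Measurable F)
    (hFbdd : ∃ C : ℝ, ∀ x ∈ W, |F x| ≤ C)
    (hFsmall : Filter.Tendsto (fun x : EuclideanSpace ℝ (Fin n) => F x / ‖x‖ ^ k)
      (𝓝[≠] (0 : EuclideanSpace ℝ (Fin n))) (𝓝 0)) :
    (fun t : ℝ => t ^ (-(n : ℝ) / 2) *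
        ∫ x in W, Hprofile α (‖x‖ / Real.sqrt t) ^ m * F x)
      =o[𝓝[>] (0 : ℝ)] fun t : ℝ => t ^ (k / 2) := by
  classical
  obtain ⟨C₀, hC₀⟩ := hFbdd
  set C := max C₀ 0 with hCdef
  have hC0 : 0 ≤ C := le_max_right _ _
  have hCF : ∀ x ∈ W, |F x| ≤ C := fun x hx => le_trans (hC₀ x hx) (le_max_left _ _)
  have hnpos : (0:ℝ) < (n:ℝ) := by exact_mod_cast hn
  have hm : 0 < m := by
    rcases hcase with ⟨_, _, h⟩ | ⟨h1, h2⟩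
    · exact h
    · have hp : 0 < m / (α - 1) := by linarith
      rcases div_pos_iff.mp hp with ⟨h, _⟩ | ⟨_, h⟩
      · exact h
      · linarith
  have hαne : α < 1 ∨ 1 < α := by
    rcases hcase with ⟨_, h, _⟩ | ⟨h, _⟩
    exacts [Or.inl h, Or.inr h]
  have hcase_k : α < 1 ∨ (1 < α ∧ (n:ℝ) + k < 2 * (m / (α - 1))) := by
    rcases hcase with ⟨_, h, _⟩ | ⟨h1, h2⟩
    · exact Or.inl h
    · exact Or.inr ⟨h1, by linarith⟩
  have hcase_0 : α < 1 ∨ (1 < α ∧ (n:ℝ) + 0 < 2 * (m / (α - 1))) := by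
    rcases hcase with ⟨_, h, _⟩ | ⟨h1, h2⟩
    · exact Or.inl h
    · exact Or.inr ⟨h1, by linarith⟩
  set g : EuclideanSpace ℝ (Fin n) → ℝ := fun y => Hprofile α ‖y‖ ^ m * ‖y‖ ^ k with hgdef
  have hg_int : Integrable g := aux_integrable n hm hk hcase_k
  have hg_nonneg : ∀ y, 0 ≤ g y := fun y => mul_nonneg
    (Real.rpow_nonneg (Hprofile_nonneg _ _) _) (Real.rpow_nonneg (norm_nonneg _) _)
  have hg0_int : Integrable (fun y : EuclideanSpace ℝ (Fin n) => Hprofile α ‖y‖ ^ m) := by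
    have := aux_integrable n hm le_rfl hcase_0
    simpa [Real.rpow_zero] using this
  set I := ∫ y, g y with hIdef
  have hI0 : 0 ≤ I := integral_nonneg hg_nonneg
  rw [Asymptotics.isLittleO_iff]
  intro ε hε
  set ε₁ := ε / (2 * (I + 1)) with hε₁def
  have hε₁ : 0 < ε₁ := by positivity
  have hε₁I : ε₁ * I ≤ ε / 2 := by
    rw [hε₁def, div_mul_eq_mul_div, div_le_div_iff₀ (by positivity) two_pos]
    nlinarith
  -- small-ball estimate for F
  obtain ⟨δ, hδ0, hδ⟩ : ∃ δ > 0, ∀ x : EuclideanSpace ℝ (Fin n), x ≠ 0 → ‖x‖ < δ →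
      |F x| ≤ ε₁ * ‖x‖ ^ k := by
    obtain ⟨δ, hδ0, hδ⟩ := Metric.tendsto_nhdsWithin_nhds.mp hFsmall ε₁ hε₁
    refine ⟨δ, hδ0, fun x hx hxδ => ?_⟩
    have h1 := hδ (x := x) (by simpa using hx) (by simpa [dist_zero_right] using hxδ)
    rw [dist_zero_right, Real.norm_eq_abs, abs_div,
      abs_of_nonneg (Real.rpow_nonneg (norm_nonneg x) k)] at h1
    have hxpos : 0 < ‖x‖ ^ k := Real.rpow_pos_of_pos (norm_pos_iff.mpr hx) k
    rw [div_lt_iff₀ hxpos] at h1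
    linarith
  -- tail of g tends to zero along t → 0⁺
  have hsq : Tendsto (fun t : ℝ => Real.sqrt t) (𝓝[>] 0) (𝓝[>] 0) := by
    apply tendsto_nhdsWithin_of_tendsto_nhds_of_eventually_within
    · have := (Real.continuous_sqrt.tendsto 0).mono_left (nhdsWithin_le_nhds (s := Set.Ioi (0:ℝ)))
      simpa using this
    · filter_upwards [self_mem_nhdsWithin] with t ht
      exact Real.sqrt_pos.mpr ht
  have hinv : Tendsto (fun t : ℝ => (Real.sqrt t)⁻¹) (𝓝[>] 0) atTop :=
    hsq.inv_tendsto_nhdsGT_zero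
  have htail0 : Tendsto (fun t : ℝ =>
      ∫ y in {y : EuclideanSpace ℝ (Fin n) | δ / Real.sqrt t ≤ ‖y‖}, g y) (𝓝[>] 0) (𝓝 0) := by
    apply (aux_tail g hg_int).comp
    have := hinv.const_mul_atTop hδ0
    simpa [div_eq_mul_inv] using this
  have hsmall : ∀ᶠ t in 𝓝[>] (0:ℝ),
      (C * δ⁻¹ ^ k) * ∫ y in {y : EuclideanSpace ℝ (Fin n) | δ / Real.sqrt t ≤ ‖y‖}, g y
        ≤ ε / 2 := by
    have hBpos : (0:ℝ) < C * δ⁻¹ ^ k + 1 := by positivity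
    have hb : (0:ℝ) < ε / 2 / (C * δ⁻¹ ^ k + 1) := by positivity
    filter_upwards [htail0.eventually_le_const hb] with t htl
    have h1 : (C * δ⁻¹ ^ k) * ∫ y in {y : EuclideanSpace ℝ (Fin n) | δ / Real.sqrt t ≤ ‖y‖}, g y
        ≤ (C * δ⁻¹ ^ k) * (ε / 2 / (C * δ⁻¹ ^ k + 1)) :=
      mul_le_mul_of_nonneg_left htl (by positivity)
    have h2 : (C * δ⁻¹ ^ k) * (ε / 2 / (C * δ⁻¹ ^ k + 1)) ≤ ε / 2 := by
      rw [mul_div_assoc'] at *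
      rw [div_le_iff₀ hBpos]
      nlinarith [hb.le, mul_nonneg hC0 (Real.rpow_nonneg (inv_nonneg.mpr hδ0.le) k)]
    linarith
  -- the main estimate for each fixed small t
  filter_upwards [hsmall, self_mem_nhdsWithin] with t hts ht
  simp only [Set.mem_Ioi] at ht
  set c := Real.sqrt t with hcdef
  have hc : 0 < c := Real.sqrt_pos.mpr ht
  set ψ : EuclideanSpace ℝ (Fin n) → ℝ := fun x => Hprofile α (‖x‖ / c) ^ m with hψdef
  have hψcont : Continuous ψ := (aux_cont hm hαne).comp (continuous_norm.div_const c)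
  have hψ0 : ∀ x, 0 ≤ ψ x := fun x => Real.rpow_nonneg (Hprofile_nonneg _ _) _
  set P : EuclideanSpace ℝ (Fin n) → ℝ := fun x => ψ x * ‖x‖ ^ k with hPdef
  have hP0 : ∀ x, 0 ≤ P x := fun x =>
    mul_nonneg (hψ0 x) (Real.rpow_nonneg (norm_nonneg _) _)
  have hPg : ∀ y, P (c • y) = c ^ k * g y := by
    intro y
    have hnorm : ‖c • y‖ = c * ‖y‖ := by
      rw [norm_smul, Real.norm_eq_abs, abs_of_pos hc]
    simp only [hPdef, hψdef, hgdef, hnorm]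
    rw [mul_div_cancel_left₀ _ hc.ne', Real.mul_rpow hc.le (norm_nonneg y)]
    ring
  have hgc : Integrable fun x : EuclideanSpace ℝ (Fin n) => g (c⁻¹ • x) :=
    hg_int.comp_smul (inv_ne_zero hc.ne')
  have hP_int : Integrable P := by
    have hPeq : P = fun x => c ^ k * g (c⁻¹ • x) := by
      funext x
      have hx : c • (c⁻¹ • x) = x := by rw [smul_smul, mul_inv_cancel₀ hc.ne', one_smul]
      rw [← hPg (c⁻¹ • x), hx]
    rw [hPeq]
    exact hgc.const_mul _
  have hψ_int : Integrable ψ := by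
    have h1 : Integrable fun x : EuclideanSpace ℝ (Fin n) => Hprofile α ‖c⁻¹ • x‖ ^ m :=
      hg0_int.comp_smul (inv_ne_zero hc.ne')
    have h2 : (fun x : EuclideanSpace ℝ (Fin n) => Hprofile α ‖c⁻¹ • x‖ ^ m) = ψ := by
      funext x
      rw [hψdef, norm_smul, Real.norm_eq_abs, abs_of_pos (inv_pos.mpr hc), inv_mul_eq_div]
    rwa [h2] at h1
  have hf_meas : AEStronglyMeasurable (fun x => ψ x * F x) (volume.restrict W) :=
    (hψcont.measurable.mul hFmeas).aestronglyMeasurable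
  have hf_int : IntegrableOn (fun x => ψ x * F x) W := by
    refine Integrable.mono' ((hψ_int.const_mul C).integrableOn) hf_meas ?_
    rw [ae_restrict_iff' hW]
    filter_upwards with x hx
    rw [Real.norm_eq_abs, abs_mul, abs_of_nonneg (hψ0 x)]
    calc ψ x * |F x| ≤ ψ x * C := mul_le_mul_of_nonneg_left (hCF x hx) (hψ0 x)
      _ = C * ψ x := mul_comm _ _
  set S := {x : EuclideanSpace ℝ (Fin n) | δ ≤ ‖x‖} with hSdef
  have hSmeas : MeasurableSet S := (isClosed_le continuous_const continuous_norm).measurableSet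
  set M : EuclideanSpace ℝ (Fin n) → ℝ :=
    fun x => ε₁ * P x + (C * δ⁻¹ ^ k) * S.indicator P x with hMdef
  have hM_int : Integrable M :=
    (hP_int.const_mul ε₁).add ((hP_int.indicator hSmeas).const_mul _)
  have hM0 : ∀ x, 0 ≤ M x := fun x => add_nonneg
    (mul_nonneg hε₁.le (hP0 x))
    (mul_nonneg (by positivity) (Set.indicator_nonneg (fun y _ => hP0 y) x))
  haveI : Nonempty (Fin n) := ⟨⟨0, hn⟩⟩
  haveI : Nontrivial (EuclideanSpace ℝ (Fin n)) := inferInstance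
  have hae0 : ∀ᵐ x : EuclideanSpace ℝ (Fin n), x ≠ 0 := by
    rw [ae_iff]
    simpa only [ne_eq, not_not, Set.setOf_eq_eq_singleton]
      using measure_singleton (0 : EuclideanSpace ℝ (Fin n))
  have hbound : ∀ᵐ x ∂(volume.restrict W), ‖ψ x * F x‖ ≤ M x := by
    rw [ae_restrict_iff' hW]
    filter_upwards [hae0] with x hx0 hxW
    rw [Real.norm_eq_abs, abs_mul, abs_of_nonneg (hψ0 x)]
    rcases lt_or_ge ‖x‖ δ with hlt | hge
    · calc ψ x * |F x| ≤ ψ x * (ε₁ * ‖x‖ ^ k) :=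
          mul_le_mul_of_nonneg_left (hδ x hx0 hlt) (hψ0 x)
        _ = ε₁ * P x := by rw [hPdef]; ring
        _ ≤ M x := le_add_of_nonneg_right
            (mul_nonneg (by positivity) (Set.indicator_nonneg (fun y _ => hP0 y) x))
    · have hxS : x ∈ S := hge
      have h1 : (1:ℝ) ≤ δ⁻¹ ^ k * ‖x‖ ^ k := by
        rw [← Real.mul_rpow (inv_nonneg.mpr hδ0.le) (norm_nonneg x)]
        calc (1:ℝ) = 1 ^ k := (Real.one_rpow k).symm
          _ ≤ (δ⁻¹ * ‖x‖) ^ k := by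
              apply Real.rpow_le_rpow zero_le_one _ hk
              rw [← inv_mul_cancel₀ hδ0.ne']
              exact mul_le_mul_of_nonneg_left hge (inv_nonneg.mpr hδ0.le)
      calc ψ x * |F x| ≤ ψ x * C := mul_le_mul_of_nonneg_left (hCF x hxW) (hψ0 x)
        _ ≤ (ψ x * C) * (δ⁻¹ ^ k * ‖x‖ ^ k) := le_mul_of_one_le_right
            (mul_nonneg (hψ0 x) hC0) h1
        _ = (C * δ⁻¹ ^ k) * P x := by rw [hPdef]; ring
        _ = (C * δ⁻¹ ^ k) * S.indicator P x := by rw [Set.indicator_of_mem hxS]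
        _ ≤ M x := le_add_of_nonneg_left (mul_nonneg hε₁.le (hP0 x))
  have hchain : |∫ x in W, ψ x * F x| ≤
      ε₁ * (∫ x, P x) + (C * δ⁻¹ ^ k) * ∫ x in S, P x := by
    calc |∫ x in W, ψ x * F x| ≤ ∫ x in W, ‖ψ x * F x‖ := by
          simpa [Real.norm_eq_abs] using
            norm_integral_le_integral_norm (μ := volume.restrict W) (fun x => ψ x * F x)
      _ ≤ ∫ x in W, M x := integral_mono_ae hf_int.norm hM_int.integrableOn hbound
      _ ≤ ∫ x, M x := setIntegral_le_integral hM_int (Filter.Eventually.of_forall hM0)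
      _ = ε₁ * (∫ x, P x) + (C * δ⁻¹ ^ k) * ∫ x in S, P x := by
          rw [hMdef]
          rw [integral_add (hP_int.const_mul ε₁) ((hP_int.indicator hSmeas).const_mul _),
            integral_const_mul, integral_const_mul, integral_indicator hSmeas]
  -- scaling identities
  have hscale1 : ∫ x, P x = c ^ n * (c ^ k * I) := by
    rw [aux_scaling P hc]
    congr 1
    rw [show (fun y => P (c • y)) = fun y => c ^ k * g y from funext hPg,
      integral_const_mul]
  have hSc : MeasurableSet {y : EuclideanSpace ℝ (Fin n) | δ / c ≤ ‖y‖} :=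
    (isClosed_le continuous_const continuous_norm).measurableSet
  have hscale2 : ∫ x in S, P x
      = c ^ n * (c ^ k * ∫ y in {y : EuclideanSpace ℝ (Fin n) | δ / c ≤ ‖y‖}, g y) := by
    rw [← integral_indicator hSmeas, aux_scaling (S.indicator P) hc]
    congr 1
    have h2 : (fun y => S.indicator P (c • y))
        = fun y => c ^ k *
          ({y : EuclideanSpace ℝ (Fin n) | δ / c ≤ ‖y‖}.indicator g y) := by
      funext y
      have hmem : c • y ∈ S ↔ δ / c ≤ ‖y‖ := by
        simp only [hSdef, Set.mem_setOf_eq, norm_smul, Real.norm_eq_abs, abs_of_pos hc]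
        rw [div_le_iff₀ hc, mul_comm]
      by_cases hy : δ / c ≤ ‖y‖
      · rw [Set.indicator_of_mem (hmem.mpr hy), Set.indicator_of_mem (by exact hy), hPg]
      · rw [Set.indicator_of_notMem (fun hmem' => hy (hmem.mp hmem')),
          Set.indicator_of_notMem (by exact hy), mul_zero]
    rw [h2, integral_const_mul, integral_indicator hSc]
  -- power arithmetic
  have hceq : c = t ^ ((1:ℝ)/2) := by rw [hcdef, Real.sqrt_eq_rpow]
  have hck : c ^ k = t ^ (k / 2) := by
    rw [hceq, ← Real.rpow_mul ht.le]
    congr 1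
    ring
  have hcn : c ^ n = t ^ ((n:ℝ) / 2) := by
    rw [hceq, ← Real.rpow_natCast (t ^ ((1:ℝ)/2)) n, ← Real.rpow_mul ht.le]
    congr 1
    ring
  set τ := ∫ y in {y : EuclideanSpace ℝ (Fin n) | δ / c ≤ ‖y‖}, g y with hτdef
  have hτ0 : 0 ≤ τ := integral_nonneg hg_nonneg
  have hXε : ε₁ * I + (C * δ⁻¹ ^ k) * τ ≤ ε := by linarith
  have hkey : ∫ x in W, Hprofile α (‖x‖ / c) ^ m * F x = ∫ x in W, ψ x * F x := rfl
  rw [hkey, Real.norm_eq_abs, Real.norm_eq_abs, abs_mul,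
    abs_of_pos (Real.rpow_pos_of_pos ht (-(n:ℝ)/2)),
    abs_of_pos (Real.rpow_pos_of_pos ht (k/2))]
  have hexp : -(n:ℝ)/2 + (n:ℝ)/2 = 0 := by ring
  calc t ^ (-(n:ℝ)/2) * |∫ x in W, ψ x * F x|
      ≤ t ^ (-(n:ℝ)/2) * (ε₁ * (c ^ n * (c ^ k * I))
          + (C * δ⁻¹ ^ k) * (c ^ n * (c ^ k * τ))) := by
        apply mul_le_mul_of_nonneg_left _ (Real.rpow_pos_of_pos ht _).le
        rw [← hscale1, ← hscale2]
        exact hchain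
    _ = (t ^ (-(n:ℝ)/2) * t ^ ((n:ℝ)/2)) * (t ^ (k/2)
          * (ε₁ * I + (C * δ⁻¹ ^ k) * τ)) := by
        rw [hcn, hck]; ring
    _ = t ^ (k/2) * (ε₁ * I + (C * δ⁻¹ ^ k) * τ) := by
        rw [← Real.rpow_add ht, hexp, Real.rpow_zero, one_mul]
    _ ≤ t ^ (k/2) * ε := mul_le_mul_of_nonneg_left hXε (Real.rpow_nonneg ht.le _)
    _ = ε * t ^ (k/2) := mul_comm _ _
end
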